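/- Let α, μ, ĥ, ξ, A₀ > 0 and let f_{h_f}(u) = (α·μ^μ/(ĥ^{αμ}·Γ(μ)))·u^{αμ−1}·exp(−μ·u^α/ĥ^α) for u > 0 and f_{h_p}(y) = (ξ/A₀^ξ)·y^{ξ−1} for 0 < y ≤ A₀. Then for every x > 0, the density of the product of independent variables with these densities satisfies ∫₀^{A₀} (1/y)·f_{h_f}(x/y)·f_{h_p}(y) dy = (ξ·μ^{ξ/α}/(A₀^ξ·ĥ^ξ·Γ(μ)))·x^{ξ−1}·Γ((αμ−ξ)/α, μ·x^α/(ĥ^α·A₀^α)), where Γ(s,T) = ∫_T^∞ t^{s−1}·e^{−t} dt is the upper incomplete gamma function and Γ(μ) is the Gamma function. -/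

import Mathlib

open Real MeasureTheory

lemma pointwise_eq (α μ hhat ξ A₀ x y : ℝ) (hα : 0 < α) (hμ : 0 < μ)
    (hh : 0 < hhat) (hξ : 0 < ξ) (hA : 0 < A₀) (hx : 0 < x) (hy : 0 < y) :
    (1 / y) *
        ((α * μ ^ μ / (hhat ^ (α * μ) * Real.Gamma μ)) * (x / y) ^ (α * μ - 1) *
          Real.exp (-μ * (x / y) ^ α / hhat ^ α)) *
        ((ξ / A₀ ^ ξ) * y ^ (ξ - 1))
      = (ξ * μ ^ (ξ / α) / (A₀ ^ ξ * hhat ^ ξ * Real.Gamma μ) * x ^ (ξ - 1)) *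
        ((μ * x ^ α / hhat ^ α) *
          (α * y ^ (-α - 1) *
            ((μ * x ^ α / hhat ^ α * y ^ (-α)) ^ ((α * μ - ξ) / α - 1) *
              Real.exp (-(μ * x ^ α / hhat ^ α * y ^ (-α)))))) := by
  have hxα : (0:ℝ) < x ^ α := Real.rpow_pos_of_pos hx α
  have hhα : (0:ℝ) < hhat ^ α := Real.rpow_pos_of_pos hh α
  have hyα : (0:ℝ) < y ^ (-α) := Real.rpow_pos_of_pos hy _
  have hexp : -μ * (x / y) ^ α / hhat ^ α = -(μ * x ^ α / hhat ^ α * y ^ (-α)) := by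
    rw [Real.div_rpow hx.le hy.le, Real.rpow_neg hy.le]
    field_simp
  rw [hexp]
  rw [Real.div_rpow hx.le hy.le, div_eq_mul_inv (x ^ (α * μ - 1)), ← Real.rpow_neg hy.le]
  rw [Real.mul_rpow (by positivity) hyα.le, Real.div_rpow (by positivity) hhα.le,
    Real.mul_rpow hμ.le hxα.le, ← Real.rpow_mul hx.le, ← Real.rpow_mul hh.le,
    ← Real.rpow_mul hy.le]
  have hc1 : α * ((α * μ - ξ) / α - 1) = α * μ - ξ - α := by field_simp
  have hc2 : -α * ((α * μ - ξ) / α - 1) = ξ - α * μ + α := by field_simp; ring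
  rw [hc1, hc2]
  have f1 : μ ^ (ξ / α) * (μ * μ ^ ((α * μ - ξ) / α - 1)) = μ ^ μ := by
    rw [show μ ^ (ξ / α) * (μ * μ ^ ((α * μ - ξ) / α - 1))
        = μ ^ (ξ / α) * (μ ^ (1:ℝ) * μ ^ ((α * μ - ξ) / α - 1)) by rw [Real.rpow_one],
      ← Real.rpow_add hμ, ← Real.rpow_add hμ]
    congr 1
    field_simp
    ring
  have f2 : x ^ (ξ - 1) * (x ^ α * x ^ (α * μ - ξ - α)) = x ^ (α * μ - 1) := by
    rw [← Real.rpow_add hx, ← Real.rpow_add hx]; congr 1; ring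
  have f3 : hhat ^ ξ * (hhat ^ α * hhat ^ (α * μ - ξ - α)) = hhat ^ (α * μ) := by
    rw [← Real.rpow_add hh, ← Real.rpow_add hh]; congr 1; ring
  have f4 : y ^ (-(α * μ - 1)) * (y⁻¹ * y ^ (ξ - 1)) = y ^ (-α - 1) * y ^ (ξ - α * μ + α) := by
    rw [show (y:ℝ)⁻¹ = y ^ (-1:ℝ) by rw [Real.rpow_neg_one],
      ← Real.rpow_add hy, ← Real.rpow_add hy, ← Real.rpow_add hy]
    congr 1; ring
  rw [← f1, ← f2, ← f3]
  linear_combination (α * ξ * μ ^ (ξ / α) * μ * μ ^ ((α * μ - ξ) / α - 1) * x ^ (ξ - 1) *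
      x ^ α * x ^ (α * μ - ξ - α) *
      Real.exp (-(μ * x ^ α / hhat ^ α * y ^ (-α))) /
      (A₀ ^ ξ * hhat ^ ξ * hhat ^ α * hhat ^ (α * μ - ξ - α) * Real.Gamma μ)) * f4

/-- The density of the product of an independent α–μ fading coefficient and a
misalignment fading coefficient: for every `x > 0`,
`∫₀^{A₀} (1/y) f_{h_f}(x/y) f_{h_p}(y) dy
  = (ξ μ^{ξ/α}/(A₀^ξ hhat^ξ Γ(μ))) x^{ξ-1} Γ((αμ-ξ)/α, μ x^α/(hhat^α A₀^α))`. -/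
theorem product_density_eq
    (α μ hhat ξ A₀ : ℝ) (hα : 0 < α) (hμ : 0 < μ) (hhat_pos : 0 < hhat)
    (hξ : 0 < ξ) (hA₀ : 0 < A₀) (x : ℝ) (hx : 0 < x) :
    (∫ y in Set.Ioc (0 : ℝ) A₀,
        (1 / y) *
          ((α * μ ^ μ / (hhat ^ (α * μ) * Real.Gamma μ)) * (x / y) ^ (α * μ - 1) *
            Real.exp (-μ * (x / y) ^ α / hhat ^ α)) *
          ((ξ / A₀ ^ ξ) * y ^ (ξ - 1)))
      = (ξ * μ ^ (ξ / α) / (A₀ ^ ξ * hhat ^ ξ * Real.Gamma μ)) * x ^ (ξ - 1) *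
          ∫ t in Set.Ioi (μ * x ^ α / (hhat ^ α * A₀ ^ α)),
            t ^ ((α * μ - ξ) / α - 1) * Real.exp (-t) := by
  set k : ℝ := μ * x ^ α / hhat ^ α with hkdef
  have hxα : (0:ℝ) < x ^ α := Real.rpow_pos_of_pos hx α
  have hhα : (0:ℝ) < hhat ^ α := Real.rpow_pos_of_pos hhat_pos α
  have hAα : (0:ℝ) < A₀ ^ α := Real.rpow_pos_of_pos hA₀ α
  have hk : 0 < k := by rw [hkdef]; positivity
  have hT0 : (0:ℝ) < A₀ ^ (-α) := Real.rpow_pos_of_pos hA₀ _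
  have hT : μ * x ^ α / (hhat ^ α * A₀ ^ α) = k * A₀ ^ (-α) := by
    rw [Real.rpow_neg hA₀.le, hkdef]
    field_simp
  rw [hT]
  -- key monotonicity fact
  have key : ∀ y : ℝ, 0 < y → (A₀ ^ (-α) ≤ y ^ (-α) ↔ y ≤ A₀) := by
    intro y hy
    rw [Real.rpow_neg hA₀.le, Real.rpow_neg hy.le,
      inv_le_inv₀ (Real.rpow_pos_of_pos hA₀ α) (Real.rpow_pos_of_pos hy α)]
    exact Real.rpow_le_rpow_iff hy.le hA₀.le hα
  set F : ℝ → ℝ := (Set.Ici (A₀ ^ (-α))).indicator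
      (fun t => (k * t) ^ ((α * μ - ξ) / α - 1) * Real.exp (-(k * t))) with hF
  have step1 : (∫ t in Set.Ioi (k * A₀ ^ (-α)), t ^ ((α * μ - ξ) / α - 1) * Real.exp (-t))
      = k * ∫ t in Set.Ioi (A₀ ^ (-α)),
          ((k * t) ^ ((α * μ - ξ) / α - 1) * Real.exp (-(k * t))) := by
    rw [MeasureTheory.integral_comp_mul_left_Ioi
        (fun t => t ^ ((α * μ - ξ) / α - 1) * Real.exp (-t)) (A₀ ^ (-α)) hk,
      smul_eq_mul, ← mul_assoc, mul_inv_cancel₀ hk.ne', one_mul]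
  have step2 : (∫ t in Set.Ioi (A₀ ^ (-α)),
        ((k * t) ^ ((α * μ - ξ) / α - 1) * Real.exp (-(k * t))))
      = ∫ t in Set.Ioi (0:ℝ), F t := by
    have hinter : Set.Ioi (0:ℝ) ∩ Set.Ici (A₀ ^ (-α)) = Set.Ici (A₀ ^ (-α)) :=
      Set.inter_eq_self_of_subset_right (fun t ht => lt_of_lt_of_le hT0 ht)
    rw [hF, MeasureTheory.setIntegral_indicator measurableSet_Ici, hinter,
      MeasureTheory.integral_Ici_eq_integral_Ioi]
  have step3 : (∫ y in Set.Ioi (0:ℝ), (|(-α)| * y ^ ((-α) - 1)) • F (y ^ (-α)))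
      = ∫ t in Set.Ioi (0:ℝ), F t :=
    MeasureTheory.integral_comp_rpow_Ioi F (neg_ne_zero.mpr hα.ne')
  have step4 : (∫ y in Set.Ioi (0:ℝ), (|(-α)| * y ^ ((-α) - 1)) • F (y ^ (-α)))
      = ∫ y in Set.Ioc (0:ℝ) A₀,
          (α * y ^ (-α - 1) *
            ((k * y ^ (-α)) ^ ((α * μ - ξ) / α - 1) * Real.exp (-(k * y ^ (-α))))) := by
    have hIoc : Set.Ioi (0:ℝ) ∩ Set.Ioc (0:ℝ) A₀ = Set.Ioc (0:ℝ) A₀ :=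
      Set.inter_eq_self_of_subset_right Set.Ioc_subset_Ioi_self
    rw [← hIoc, ← MeasureTheory.setIntegral_indicator measurableSet_Ioc]
    apply MeasureTheory.setIntegral_congr_fun measurableSet_Ioi
    intro y hy
    have hy0 : 0 < y := hy
    simp only [hF]
    by_cases hyA : y ≤ A₀
    · rw [Set.indicator_of_mem (Set.mem_Ici.mpr ((key y hy0).mpr hyA)),
        Set.indicator_of_mem (Set.mem_Ioc.mpr ⟨hy0, hyA⟩), smul_eq_mul, abs_neg,
        abs_of_pos hα]
    · rw [Set.indicator_of_notMem (fun h => hyA ((key y hy0).mp (Set.mem_Ici.mp h))),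
        Set.indicator_of_notMem (fun h => hyA (Set.mem_Ioc.mp h).2), smul_zero]
  rw [step1, step2, ← step3, step4, ← MeasureTheory.integral_const_mul,
    ← MeasureTheory.integral_const_mul]
  apply MeasureTheory.setIntegral_congr_fun measurableSet_Ioc
  intro y hy
  rw [hkdef]
  exact pointwise_eq α μ hhat ξ A₀ x y hα hμ hhat_pos hξ hA₀ hx (Set.mem_Ioc.mp hy).1
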